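/- arXiv:1702.07365 — 2 statements merged into one kernel-verified Lean document; each statement's English description precedes it below -/
import Mathlib

section
/- Let 𝒜 = {a_1 < a_2 < …} be an infinite set of natural numbers and let α ∈ ℝ. Suppose that for every s > 0, F(𝒜, α, s, N) → 2s as N → ∞. Then the sequence (α·a_n mod 1) is equidistributed in ℝ/ℤ; that is, for every interval I ⊆ [0,1), (1/N)·#{n ≤ N : α·a_n mod 1 ∈ I} → |I| as N → ∞. -/
set_option maxHeartbeats 1000000

open MeasureTheory Filter Finset
open scoped Classical

/-- Distance from a real number to the nearest integer. -/
noncomputable def intDist (x : ℝ) : ℝ := |x - round x|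

/-- The pair correlation function `F(𝒜, α, s, N)` for the sequence `a` (1-indexed):
`(1/N) · #{(i,j) : 1 ≤ i,j ≤ N, i ≠ j, ‖α(a_i − a_j)‖ ≤ s/N}`. -/
noncomputable def pairCorr (a : ℕ → ℕ) (α s : ℝ) (N : ℕ) : ℝ :=
  (((Finset.Icc 1 N ×ˢ Finset.Icc 1 N).filter
    (fun p => p.1 ≠ p.2 ∧ intDist (α * ((a p.1 : ℝ) - (a p.2 : ℝ))) ≤ s / N)).card : ℝ) / N

/-- A (strictly increasing) sequence is metric Poissonian if for a.e. `α ∈ [0,1]` and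
every `s > 0`, `F(𝒜, α, s, N) → 2s`. -/
def MetricPoissonian (a : ℕ → ℕ) : Prop :=
  ∀ᵐ α ∂(volume.restrict (Set.Icc (0:ℝ) 1)),
    ∀ s : ℝ, 0 < s → Tendsto (fun N => pairCorr a α s N) atTop (nhds (2 * s))

/-- The additive energy of a finite set of naturals: the number of quadruples
`(b₁,b₂,b₃,b₄) ∈ B⁴` with `b₁ + b₂ = b₃ + b₄`. -/
def addEnergy (B : Finset ℕ) : ℕ :=
  ((B ×ˢ B ×ˢ B ×ˢ B).filter (fun q => q.1 + q.2.1 = q.2.2.1 + q.2.2.2)).card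

/-- The first `N` elements of the set associated to the (1-indexed) sequence `a`. -/
def firstN (a : ℕ → ℕ) (N : ℕ) : Finset ℕ := (Finset.Icc 1 N).image a

/-- The increasing sequence of all primes, 1-indexed: `primeSeq 1 = 2`, `primeSeq 2 = 3`, … -/
noncomputable def primeSeq (n : ℕ) : ℕ := Nat.nth Nat.Prime (n - 1)

lemma intDist_nonneg (x : ℝ) : 0 ≤ intDist x := abs_nonneg _

lemma gaussIcc (K : ℕ) : (∑ k ∈ Icc 1 K, (k:ℝ)) = K*(K+1)/2 := by
  induction K with
  | zero => simp
  | succ n ih => rw [Finset.sum_Icc_succ_top (by omega)]; push_cast; rw [ih]; ring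

lemma fract_shift (c y : ℝ) : Int.fract (Int.fract c - y) = Int.fract (c - y) := by
  rw [Int.fract_eq_fract]
  exact ⟨-⌊c⌋, by rw [Int.fract]; push_cast; ring⟩

lemma intDist_eq (x : ℝ) : intDist x = min (Int.fract x) (1 - Int.fract x) := by
  have hx : x - (⌊x⌋ : ℝ) = Int.fract x := rfl
  have h0 : 0 ≤ Int.fract x := Int.fract_nonneg x
  have h1 : Int.fract x < 1 := Int.fract_lt_one x
  have hround : round x = ⌊x⌋ + ⌊Int.fract x + 1/2⌋ := by
    rw [round_eq]
    have : x + 1/2 = (⌊x⌋ : ℝ) + (Int.fract x + 1/2) := by rw [← hx]; ring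
    rw [this, Int.floor_intCast_add]
  rcases lt_or_ge (Int.fract x) (1/2) with hf | hf
  · have hz : ⌊Int.fract x + 1/2⌋ = 0 := by
      apply Int.floor_eq_zero_iff.2; constructor
      · linarith
      · simpa using by linarith
    rw [intDist, hround, hz, min_eq_left (by linarith)]
    push_cast
    rw [show x - ((⌊x⌋ : ℝ) + 0) = Int.fract x by rw [← hx]; ring]
    exact abs_of_nonneg h0
  · have hz : ⌊Int.fract x + 1/2⌋ = 1 := by
      have : (1 : ℤ) ≤ ⌊Int.fract x + 1/2⌋ := by
        rw [Int.le_floor]; push_cast; linarith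
      have h2 : ⌊Int.fract x + 1/2⌋ < 2 := by
        rw [Int.floor_lt]; push_cast; linarith
      omega
    rw [intDist, hround, hz, min_eq_right (by linarith)]
    push_cast
    rw [show x - ((⌊x⌋ : ℝ) + 1) = Int.fract x - 1 by rw [← hx]; ring]
    rw [abs_of_nonpos (by linarith)]; ring

lemma gridCount_int (M : ℕ) (hM : 0 < M) (c p q : ℝ)
    (hc0 : 0 ≤ c) (hc1 : c < 1) (hp : 0 ≤ p) (hpq : p ≤ q) (hq : q ≤ 1) :
    (((range M).filter fun m : ℕ => p ≤ Int.fract (c - (m:ℝ) / M) ∧ Int.fract (c - (m:ℝ) / M) < q).card : ℤ)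
      = ⌊(c - p) * M⌋ - ⌊(c - q) * M⌋ := by
  classical
  have hMR : (0:ℝ) < M := by exact_mod_cast hM
  set s := (range M).filter fun m : ℕ => p ≤ Int.fract (c - (m:ℝ) / M) ∧ Int.fract (c - (m:ℝ) / M) < q with hs
  set t := Finset.Ioc ⌊(c - q) * M⌋ ⌊(c - p) * M⌋ with ht
  have hfloor_le : ⌊(c - q) * M⌋ ≤ ⌊(c - p) * M⌋ :=
    Int.floor_le_floor (by nlinarith)
  have key : s.card = t.card := by
    apply Finset.card_bij' (i := fun (m : ℕ) _ => if (m : ℝ) ≤ (c - p) * M then (m : ℤ) else (m : ℤ) - M)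
      (j := fun (z : ℤ) _ => if 0 ≤ z then z.toNat else (z + M).toNat)
    · -- hi : forward membership
      intro m hm
      simp only [hs, mem_filter, mem_range] at hm
      obtain ⟨hmM, hP1, hP2⟩ := hm
      have hmMR : (m : ℝ) / M < 1 := (div_lt_one hMR).2 (by exact_mod_cast hmM)
      have hmMR0 : 0 ≤ (m : ℝ) / M := by positivity
      have hdiv : (m : ℝ) / M * M = m := div_mul_cancel₀ _ (ne_of_gt hMR)
      rcases le_or_gt 0 (c - (m:ℝ)/M) with hw | hw
      · have hfr : Int.fract (c - (m:ℝ)/M) = c - (m:ℝ)/M :=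
          Int.fract_eq_self.2 ⟨hw, by linarith⟩
        rw [hfr] at hP1 hP2
        have hbr : (m : ℝ) ≤ (c - p) * M := by nlinarith
        simp only [hbr, if_pos, ht, Finset.mem_Ioc]
        constructor
        · rw [Int.floor_lt]; push_cast; nlinarith
        · rw [Int.le_floor]; push_cast; exact hbr
      · have hfr : Int.fract (c - (m:ℝ)/M) = c - (m:ℝ)/M + 1 := by
          rw [← Int.fract_add_one (c - (m:ℝ)/M)]
          exact Int.fract_eq_self.2 ⟨by linarith, by linarith⟩
        rw [hfr] at hP1 hP2
        have hbr : ¬ ((m : ℝ) ≤ (c - p) * M) := by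
          push_neg; nlinarith
        simp only [hbr, if_neg, if_false, ht, Finset.mem_Ioc]
        constructor
        · rw [Int.floor_lt]; push_cast; nlinarith
        · rw [Int.le_floor]; push_cast; nlinarith
    · -- hj : backward membership
      intro z hz
      simp only [ht, Finset.mem_Ioc] at hz
      obtain ⟨hz1, hz2⟩ := hz
      have hz1R : (c - q) * M < (z : ℝ) := by
        have := Int.floor_lt.1 hz1; exact_mod_cast this
      have hz2R : (z : ℝ) ≤ (c - p) * M := by
        have := Int.le_floor.1 hz2; exact_mod_cast this
      have hd1 : (z:ℝ)/M ≤ c - p := (div_le_iff₀ hMR).2 hz2R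
      have hd2 : c - q < (z:ℝ)/M := (lt_div_iff₀ hMR).2 hz1R
      rcases le_or_gt 0 z with hz0 | hz0
      · have hzM : z < M := by
          have : (z : ℝ) < 1 * M := lt_of_le_of_lt hz2R (by nlinarith)
          rw [one_mul] at this
          exact_mod_cast this
        have htn : ((z.toNat : ℕ) : ℝ) = (z : ℝ) := by exact_mod_cast Int.toNat_of_nonneg hz0
        simp only [hz0, if_pos, hs, mem_filter, mem_range, htn]
        refine ⟨by omega, ?_⟩
        have hfr : Int.fract (c - (z:ℝ)/M) = c - (z:ℝ)/M :=
          Int.fract_eq_self.2 ⟨by linarith, by linarith⟩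
        rw [hfr]
        constructor <;> linarith
      · have hzM0 : 0 ≤ z + M := by
          have : -(1:ℝ) * M ≤ (c - q) * M := by nlinarith
          have : -(M:ℝ) < (z:ℝ) := by nlinarith
          have : -(M:ℤ) < z := by exact_mod_cast this
          omega
        have htn : (((z + M).toNat : ℕ) : ℝ) = (z : ℝ) + M := by
          have := Int.toNat_of_nonneg hzM0
          have : (((z + (M:ℤ)).toNat : ℤ) : ℝ) = ((z + (M:ℤ) : ℤ) : ℝ) := by exact_mod_cast congrArg Int.cast this
          push_cast at this ⊢
          linarith [this]
        simp only [hz0.not_ge, if_neg, if_false, hs, mem_filter, mem_range]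
        have hmM : (z + M).toNat < M := by omega
        refine ⟨hmM, ?_⟩
        rw [htn]
        have harg : c - ((z:ℝ) + M)/M = (c - (z:ℝ)/M - 1) := by
          field_simp
          ring
        rw [harg]
        have hfr : Int.fract (c - (z:ℝ)/M - 1) = c - (z:ℝ)/M := by
          rw [show c - (z:ℝ)/M - 1 = (c - (z:ℝ)/M) + (-1) by ring]
          rw [show (-1 : ℝ) = ((-1 : ℤ) : ℝ) by push_cast; ring, Int.fract_add_intCast]
          exact Int.fract_eq_self.2 ⟨by linarith, by linarith⟩
        rw [hfr]
        constructor <;> linarith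
    · -- left inverse
      intro m hm
      simp only [hs, mem_filter, mem_range] at hm
      rcases le_or_gt (m:ℝ) ((c-p)*M) with hbr | hbr
      · simp [hbr]
      · simp only [not_le.2 hbr, if_neg, if_false]
        have : ¬ (0 ≤ (m:ℤ) - M) := by
          have : m < M := hm.1
          omega
        simp only [this, if_neg, if_false]
        omega
    · -- right inverse
      intro z hz
      simp only [ht, Finset.mem_Ioc] at hz
      obtain ⟨hz1, hz2⟩ := hz
      have hz1R : (c - q) * M < (z : ℝ) := by
        have := Int.floor_lt.1 hz1; exact_mod_cast this
      have hz2R : (z : ℝ) ≤ (c - p) * M := by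
        have := Int.le_floor.1 hz2; exact_mod_cast this
      rcases le_or_gt 0 z with hz0 | hz0
      · have h1 : ((z.toNat : ℕ) : ℝ) ≤ (c - p) * M := by
          rw [show ((z.toNat : ℕ) : ℝ) = (z:ℝ) by exact_mod_cast Int.toNat_of_nonneg hz0]
          exact hz2R
        simp only [hz0, if_pos, h1]
        omega
      · have hzM0 : 0 ≤ z + M := by
          have : -(1:ℝ) * M ≤ (c - q) * M := by nlinarith
          have : -(M:ℝ) < (z:ℝ) := by nlinarith
          have : -(M:ℤ) < z := by exact_mod_cast this
          omega
        have htn : (((z + M).toNat : ℕ) : ℝ) = (z : ℝ) + M := by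
          have := Int.toNat_of_nonneg hzM0
          have : (((z + (M:ℤ)).toNat : ℤ) : ℝ) = ((z + (M:ℤ) : ℤ) : ℝ) := by exact_mod_cast congrArg Int.cast this
          push_cast at this ⊢
          linarith [this]
        have hbr : ¬ ((((z + M).toNat : ℕ) : ℝ) ≤ (c - p) * M) := by
          push_neg
          rw [htn]
          nlinarith
        simp only [hz0.not_ge, if_neg, if_false, hbr]
        omega
  rw [key, ht, Int.card_Ioc, Int.toNat_of_nonneg (by omega)]

lemma gridCount_bounds (M : ℕ) (hM : 0 < M) (c p q : ℝ)
    (hp : 0 ≤ p) (hpq : p ≤ q) (hq : q ≤ 1) :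
    (q - p) * M - 1 ≤ (((range M).filter fun m : ℕ =>
        p ≤ Int.fract (c - (m:ℝ)/M) ∧ Int.fract (c - (m:ℝ)/M) < q).card : ℝ)
    ∧ (((range M).filter fun m : ℕ =>
        p ≤ Int.fract (c - (m:ℝ)/M) ∧ Int.fract (c - (m:ℝ)/M) < q).card : ℝ) ≤ (q - p) * M + 1 := by
  classical
  have hcongr : ((range M).filter fun m : ℕ =>
        p ≤ Int.fract (c - (m:ℝ)/M) ∧ Int.fract (c - (m:ℝ)/M) < q)
      = ((range M).filter fun m : ℕ =>
        p ≤ Int.fract (Int.fract c - (m:ℝ)/M) ∧ Int.fract (Int.fract c - (m:ℝ)/M) < q) := by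
    apply filter_congr; intro m _; rw [fract_shift]
  rw [hcongr]
  have h := gridCount_int M hM (Int.fract c) p q (Int.fract_nonneg c) (Int.fract_lt_one c) hp hpq hq
  have hR : ((((range M).filter fun m : ℕ =>
        p ≤ Int.fract (Int.fract c - (m:ℝ)/M) ∧ Int.fract (Int.fract c - (m:ℝ)/M) < q).card : ℝ))
      = (⌊(Int.fract c - p) * M⌋ : ℝ) - (⌊(Int.fract c - q) * M⌋ : ℝ) := by
    exact_mod_cast congrArg (Int.cast : ℤ → ℝ) h
  rw [hR]
  have h1 := Int.floor_le ((Int.fract c - p) * M)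
  have h2 := Int.lt_floor_add_one ((Int.fract c - p) * M)
  have h3 := Int.floor_le ((Int.fract c - q) * M)
  have h4 := Int.lt_floor_add_one ((Int.fract c - q) * M)
  constructor <;> nlinarith

lemma rowCount_bounds (M : ℕ) (hM : 0 < M) (c δ : ℝ) (hδ0 : 0 ≤ δ) (hδ1 : δ ≤ 1) :
    δ * M - 1 ≤ (((range M).filter fun m : ℕ => Int.fract (c - (m:ℝ)/M) < δ).card : ℝ)
    ∧ (((range M).filter fun m : ℕ => Int.fract (c - (m:ℝ)/M) < δ).card : ℝ) ≤ δ * M + 1 := by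
  classical
  have hcongr : ((range M).filter fun m : ℕ => Int.fract (c - (m:ℝ)/M) < δ)
      = ((range M).filter fun m : ℕ =>
        (0:ℝ) ≤ Int.fract (c - (m:ℝ)/M) ∧ Int.fract (c - (m:ℝ)/M) < δ) := by
    apply filter_congr; intro m _
    simp [Int.fract_nonneg]
  rw [hcongr]
  have := gridCount_bounds M hM c 0 δ le_rfl hδ0 hδ1
  simpa using this

lemma pairOverlap (M : ℕ) (hM : 0 < M) (c c' δ : ℝ) (hδ0 : 0 < δ) (hδh : δ ≤ 1/2) :
    (((range M).filter fun m : ℕ =>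
        Int.fract (c - (m:ℝ)/M) < δ ∧ Int.fract (c' - (m:ℝ)/M) < δ).card : ℝ)
      ≤ max 0 (δ - intDist (c - c')) * M + 2 := by
  classical
  set e := Int.fract (c - c') with he_def
  have he0 : 0 ≤ e := Int.fract_nonneg _
  have he1 : e < 1 := Int.fract_lt_one _
  set Fa := (range M).filter fun m : ℕ =>
      min e δ ≤ Int.fract (c - (m:ℝ)/M) ∧ Int.fract (c - (m:ℝ)/M) < δ with hFa
  set Fb := (range M).filter fun m : ℕ =>
      (0:ℝ) ≤ Int.fract (c - (m:ℝ)/M) ∧ Int.fract (c - (m:ℝ)/M) < max 0 (δ + e - 1) with hFb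
  have hsub : ((range M).filter fun m : ℕ =>
      Int.fract (c - (m:ℝ)/M) < δ ∧ Int.fract (c' - (m:ℝ)/M) < δ) ⊆ Fa ∪ Fb := by
    intro m hm
    simp only [mem_filter, mem_range] at hm
    obtain ⟨hmM, h1, h2⟩ := hm
    set t := Int.fract (c - (m:ℝ)/M) with ht_def
    set t' := Int.fract (c' - (m:ℝ)/M) with ht'_def
    have ht0 : 0 ≤ t := Int.fract_nonneg _
    have ht1 : t < 1 := Int.fract_lt_one _
    have ht'0 : 0 ≤ t' := Int.fract_nonneg _
    have ht'1 : t' < 1 := Int.fract_lt_one _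
    have he : Int.fract (t - t') = e := by
      rw [he_def, Int.fract_eq_fract]
      refine ⟨⌊c' - (m:ℝ)/M⌋ - ⌊c - (m:ℝ)/M⌋, ?_⟩
      rw [ht_def, ht'_def, Int.fract, Int.fract]
      push_cast
      ring
    rcases le_or_gt t' t with hc1 | hc1
    · have : Int.fract (t - t') = t - t' := Int.fract_eq_self.2 ⟨by linarith, by linarith⟩
      rw [this] at he
      apply Finset.mem_union_left
      simp only [hFa, mem_filter, mem_range]
      exact ⟨hmM, le_trans (min_le_left _ _) (by linarith), h1⟩
    · have : Int.fract (t - t') = t - t' + 1 := by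
        rw [← Int.fract_add_one (t - t')]
        exact Int.fract_eq_self.2 ⟨by linarith, by linarith⟩
      rw [this] at he
      apply Finset.mem_union_right
      simp only [hFb, mem_filter, mem_range]
      exact ⟨hmM, ht0, lt_max_of_lt_right (by linarith)⟩
  have hcard : (((range M).filter fun m : ℕ =>
      Int.fract (c - (m:ℝ)/M) < δ ∧ Int.fract (c' - (m:ℝ)/M) < δ).card : ℝ)
      ≤ (Fa.card : ℝ) + (Fb.card : ℝ) := by
    have := (Finset.card_le_card hsub).trans (Finset.card_union_le Fa Fb)
    exact_mod_cast this
  have hFaB := (gridCount_bounds M hM c (min e δ) δ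
    (le_min he0 hδ0.le) (min_le_right _ _) (by linarith)).2
  have hFbB := (gridCount_bounds M hM c 0 (max 0 (δ + e - 1))
    le_rfl (le_max_left _ _) (by rw [max_le_iff]; constructor <;> linarith)).2
  have hd : intDist (c - c') = min e (1 - e) := intDist_eq _
  have hkey : (δ - min e δ) + (max 0 (δ + e - 1) - 0) ≤ max 0 (δ - intDist (c - c')) := by
    rw [hd]
    rcases le_total e (1 - e) with h | h
    · rw [min_eq_left h]
      rcases le_total e δ with h2 | h2
      · rw [min_eq_left h2, max_eq_right (by linarith : (0:ℝ) ≤ δ - e),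
          max_eq_left (by linarith : δ + e - 1 ≤ 0)]
        linarith
      · rw [min_eq_right h2, max_eq_left (by linarith : δ + e - 1 ≤ 0)]
        simp [le_max_left]
    · rw [min_eq_right h, min_eq_right (by linarith : δ ≤ e)]
      rcases le_total (δ + e - 1) 0 with h2 | h2
      · rw [max_eq_left h2]; simp [le_max_left]
      · rw [max_eq_right h2, max_eq_right (by linarith : (0:ℝ) ≤ δ - (1 - e))]
        linarith
  have hMR : (0:ℝ) ≤ M := by positivity
  calc (((range M).filter fun m : ℕ =>
      Int.fract (c - (m:ℝ)/M) < δ ∧ Int.fract (c' - (m:ℝ)/M) < δ).card : ℝ)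
      ≤ (Fa.card : ℝ) + (Fb.card : ℝ) := hcard
    _ ≤ ((δ - min e δ) * M + 1) + ((max 0 (δ + e - 1) - 0) * M + 1) := by
        exact add_le_add hFaB hFbB
    _ ≤ max 0 (δ - intDist (c - c')) * M + 2 := by nlinarith

lemma stepBound (δ d : ℝ) (K : ℕ) (hK : 0 < K) (hδ : 0 < δ) (hd : 0 ≤ d) :
    max 0 (δ - d) ≤ (δ / K) * (((Icc 1 K).filter fun k : ℕ => d ≤ (k:ℝ) * δ / K).card : ℝ) := by
  classical
  have hKR : (0:ℝ) < K := by exact_mod_cast hK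
  rcases le_or_gt d δ with hdδ | hdδ
  · have hx0 : 0 ≤ d * K / δ := by positivity
    set k₀ : ℕ := max 1 ⌈d * K / δ⌉₊ with hk₀
    have hk₀K : k₀ ≤ K := by
      apply max_le hK
      apply Nat.ceil_le.2
      rw [div_le_iff₀ hδ]
      nlinarith
    have hsub : Icc k₀ K ⊆ (Icc 1 K).filter fun k : ℕ => d ≤ (k:ℝ) * δ / K := by
      intro k hk
      simp only [mem_Icc] at hk
      simp only [mem_filter, mem_Icc]
      refine ⟨⟨le_trans (le_max_left _ _) hk.1, hk.2⟩, ?_⟩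
      have h1 : d * K / δ ≤ (k : ℝ) := le_trans (Nat.le_ceil _)
        (by exact_mod_cast le_trans (le_max_right 1 _) hk.1)
      rw [le_div_iff₀ hKR]
      rw [div_le_iff₀ hδ] at h1
      nlinarith
    have hcard : (K + 1 - k₀ : ℝ) ≤ (((Icc 1 K).filter fun k : ℕ => d ≤ (k:ℝ) * δ / K).card : ℝ) := by
      have h1 : (Icc k₀ K).card = K + 1 - k₀ := Nat.card_Icc _ _
      have h2 := Finset.card_le_card hsub
      rw [h1] at h2
      have h3 : (↑(K + 1 - k₀) : ℝ) = (K:ℝ) + 1 - k₀ := by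
        have : k₀ ≤ K + 1 := by omega
        push_cast [Nat.cast_sub this]
        ring
      rw [← h3]
      exact_mod_cast h2
    have hk₀le : (k₀ : ℝ) ≤ d * K / δ + 1 := by
      rw [hk₀]
      have h1 : (⌈d * K / δ⌉₊ : ℝ) ≤ d * K / δ + 1 := (Nat.ceil_lt_add_one hx0).le
      have h2 : ((max 1 ⌈d * K / δ⌉₊ : ℕ) : ℝ) = max (1:ℝ) (⌈d * K / δ⌉₊ : ℝ) := by
        push_cast; rfl
      rw [h2]
      apply max_le (by linarith [hx0, div_nonneg (mul_nonneg hd hKR.le) hδ.le]) h1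
    rw [max_eq_right (by linarith)]
    calc δ - d = (δ / K) * (K - d * K / δ) := by field_simp
      _ ≤ (δ / K) * (K + 1 - k₀) := by
          apply mul_le_mul_of_nonneg_left (by linarith) (by positivity)
      _ ≤ _ := mul_le_mul_of_nonneg_left hcard (by positivity)
  · rw [max_eq_left (by linarith)]
    positivity

lemma pairCorr_card (a : ℕ → ℕ) (α s : ℝ) (N : ℕ) (hN : 0 < N) :
    ((((Finset.Icc 1 N ×ˢ Finset.Icc 1 N).filter
      (fun p => p.1 ≠ p.2 ∧ intDist (α * ((a p.1 : ℝ) - (a p.2 : ℝ))) ≤ s / N)).card : ℝ))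
      = (N : ℝ) * pairCorr a α s N := by
  rw [pairCorr]
  rw [mul_div_assoc']; exact (mul_div_cancel_left₀ _ (by positivity : (N:ℝ) ≠ 0)).symm

lemma offdiag_bound (a : ℕ → ℕ) (α : ℝ)
    (h : ∀ s : ℝ, 0 < s → Tendsto (fun N => pairCorr a α s N) atTop (nhds (2*s)))
    (S : ℝ) (hS : 1 ≤ S) :
    ∀ᶠ N : ℕ in atTop,
      ∑ p ∈ ((Icc 1 N ×ˢ Icc 1 N).filter fun p : ℕ × ℕ => p.1 ≠ p.2),
        max 0 (S/N - intDist (α * ((a p.1 : ℝ) - (a p.2 : ℝ)))) ≤ S^2 + 2*S := by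
  set K := ⌈S⌉₊ + 1 with hKdef
  have hK : 0 < K := by omega
  have hKR : (0:ℝ) < K := by exact_mod_cast hK
  have hKS : S ≤ (K : ℝ) := by
    have := Nat.le_ceil S
    rw [hKdef]; push_cast
    linarith
  have htend : Tendsto (fun N => ∑ k ∈ Icc 1 K, pairCorr a α ((k:ℝ)*S/K) N) atTop
      (nhds (∑ k ∈ Icc 1 K, 2*((k:ℝ)*S/K))) := by
    apply tendsto_finset_sum
    intro k hk
    apply h
    simp only [mem_Icc] at hk
    have hk1 : (1:ℝ) ≤ (k:ℝ) := by exact_mod_cast hk.1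
    positivity
  have hlim : (∑ k ∈ Icc 1 K, 2*((k:ℝ)*S/K)) = S*(K+1) := by
    rw [show (fun k : ℕ => 2*((k:ℝ)*S/K)) = fun k : ℕ => (2*S/K) * (k:ℝ) from by
      funext k; ring]
    rw [← Finset.mul_sum, gaussIcc]
    field_simp
  rw [hlim] at htend
  filter_upwards [htend.eventually_lt_const (show S*(K+1) < S*(K+1)+1 by linarith),
    eventually_gt_atTop 0] with N hpc hN0
  have hNR : (0:ℝ) < N := by exact_mod_cast hN0
  have hδ : (0:ℝ) < S/N := by positivity
  set P := ((Icc 1 N ×ˢ Icc 1 N).filter fun p : ℕ × ℕ => p.1 ≠ p.2) with hP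
  calc ∑ p ∈ P, max 0 (S/N - intDist (α * ((a p.1 : ℝ) - (a p.2 : ℝ))))
      ≤ ∑ p ∈ P, (S/N/K) * (((Icc 1 K).filter fun k : ℕ =>
          intDist (α * ((a p.1 : ℝ) - (a p.2 : ℝ))) ≤ (k:ℝ) * (S/N) / K).card : ℝ) := by
        apply Finset.sum_le_sum
        intro p _
        exact stepBound (S/N) _ K hK hδ (intDist_nonneg _)
    _ = (S/N/K) * ∑ k ∈ Icc 1 K, ((P.filter fun p : ℕ × ℕ =>
          intDist (α * ((a p.1 : ℝ) - (a p.2 : ℝ))) ≤ (k:ℝ) * (S/N) / K).card : ℝ) := by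
        rw [← Finset.mul_sum]
        congr 1
        have : ∀ p ∈ P, (((Icc 1 K).filter fun k : ℕ =>
            intDist (α * ((a p.1 : ℝ) - (a p.2 : ℝ))) ≤ (k:ℝ) * (S/N) / K).card : ℝ)
            = ∑ k ∈ Icc 1 K, if intDist (α * ((a p.1 : ℝ) - (a p.2 : ℝ))) ≤ (k:ℝ) * (S/N) / K then (1:ℝ) else 0 := by
          intro p _
          rw [Finset.card_filter]
          push_cast
          rfl
        rw [Finset.sum_congr rfl this, Finset.sum_comm]
        apply Finset.sum_congr rfl
        intro k _
        rw [Finset.card_filter]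
        push_cast
        rfl
    _ ≤ (S/N/K) * ∑ k ∈ Icc 1 K, (N:ℝ) * pairCorr a α ((k:ℝ)*S/K) N := by
        apply mul_le_mul_of_nonneg_left _ (by positivity)
        apply Finset.sum_le_sum
        intro k _
        rw [← pairCorr_card a α _ N hN0]
        rw [hP, Finset.filter_filter]
        apply le_of_eq
        have hAB : ((Icc 1 N ×ˢ Icc 1 N).filter fun p : ℕ × ℕ =>
            p.1 ≠ p.2 ∧ intDist (α * ((a p.1 : ℝ) - (a p.2 : ℝ))) ≤ (k:ℝ) * (S/N) / K)
            = ((Icc 1 N ×ˢ Icc 1 N).filter fun p : ℕ × ℕ =>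
            p.1 ≠ p.2 ∧ intDist (α * ((a p.1 : ℝ) - (a p.2 : ℝ))) ≤ ((k:ℝ) * S / K) / N) := by
          apply Finset.filter_congr
          intro p _
          rw [show (k:ℝ) * (S/N) / K = ((k:ℝ)*S/K)/N from by ring]
        rw [hAB]
    _ = (S/K) * ∑ k ∈ Icc 1 K, pairCorr a α ((k:ℝ)*S/K) N := by
        rw [← Finset.mul_sum]
        field_simp
    _ ≤ (S/K) * (S*(K+1)+1) := by
        apply mul_le_mul_of_nonneg_left hpc.le (by positivity)
    _ ≤ S^2 + 2*S := by
        rw [div_mul_eq_mul_div, div_le_iff₀ hKR]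
        nlinarith

lemma final_numeric (eps S n lam cnt r zR v2 vR : ℝ)
    (heps : 0 < eps) (hS1 : 1 ≤ S) (hScontra : 48 < eps^2 * S)
    (hn1 : 1 ≤ n) (h5n : 5 ≤ n) (hNn : 6*S ≤ eps*n) (hNS : S ≤ n)
    (hlam0 : 0 ≤ lam) (hlameps : lam + eps < 1)
    (hcntN : cnt ≤ n) (hcntlow : (lam + eps)*n < cnt)
    (hr : r ≤ lam*n^3 + S*n^2 + 1) (hr0 : 0 ≤ r)
    (h1 : cnt*(S*n^2 - 1) ≤ zR)
    (hv2 : v2 ≤ 3*S*n^3 + (n + 2*n^2 + 2*S*n)) (hv2nn : 0 ≤ v2)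
    (hVR : vR = zR - S*r)
    (hCS : vR^2 ≤ r * v2) : False := by
  have hS0 : (0:ℝ) < S := by linarith
  have hn0 : (0:ℝ) < n := by linarith
  have hn2 : n ≤ n^2 := by nlinarith
  have hn3 : n^2 ≤ n^3 := by nlinarith
  have hSn2 : (1:ℝ) ≤ S*n^2 := by nlinarith
  have hr3 : r ≤ 3*n^3 := by
    have e1 : lam*n^3 ≤ n^3 := by nlinarith
    have e2 : S*n^2 ≤ n*n^2 := by nlinarith
    nlinarith
  have hv24 : v2 ≤ 4*S*n^3 := by
    have e1 : n + 2*n^2 + 2*S*n ≤ 5*(S*n^2) := by nlinarith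
    have e2 : 5*(S*n^2) ≤ S*n^3 := by nlinarith
    linarith
  have hvlow : (eps/2)*S*n^3 ≤ vR := by
    rw [hVR]
    have h2 : S*r ≤ S*(lam*n^3 + S*n^2 + 1) := by nlinarith
    have h3 : (lam + eps)*n*(S*n^2 - 1) ≤ cnt*(S*n^2 - 1) := by nlinarith
    have e4 : 6*S*(S*n^2) ≤ eps*n*(S*n^2) := by nlinarith
    have e5 : S^2*n^2 ≥ n := by nlinarith
    have e6 : S^2*n^2 ≥ S := by nlinarith
    have e7 : (lam+eps)*n ≤ n := by nlinarith
    nlinarith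
  have hvpos : 0 ≤ vR := le_trans (by positivity) hvlow
  have hfin : ((eps/2)*S*n^3)^2 ≤ (3*n^3)*(4*S*n^3) := by
    have hstep : ((eps/2)*S*n^3)^2 ≤ vR^2 := pow_le_pow_left₀ (by positivity) hvlow 2
    calc ((eps/2)*S*n^3)^2 ≤ vR^2 := hstep
      _ ≤ r * v2 := hCS
      _ ≤ (3*n^3)*(4*S*n^3) := by nlinarith
  have hn6 : (0:ℝ) < n^3*n^3 := by positivity
  have hkey : eps^2*S*S ≤ 48*S := by nlinarith
  have : eps^2*S ≤ 48 := le_of_mul_le_mul_right (by nlinarith) hS0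
  linarith

lemma upper_bound (a : ℕ → ℕ) (α : ℝ)
    (h : ∀ s : ℝ, 0 < s → Tendsto (fun N => pairCorr a α s N) atTop (nhds (2*s)))
    (u v : ℝ) (hu : 0 ≤ u) (huv : u ≤ v) (hv : v ≤ 1) (ε : ℝ) (hε : 0 < ε) :
    ∀ᶠ N : ℕ in atTop,
      (((Finset.Icc 1 N).filter (fun n => Int.fract (α * a n) ∈ Set.Ico u v)).card : ℝ)
        ≤ (v - u + ε) * N := by
  rcases le_or_gt 1 (v - u + ε) with hbig | hsmall
  · -- trivial case
    filter_upwards [eventually_ge_atTop 1] with N hN1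
    have h1 : (((Finset.Icc 1 N).filter (fun n => Int.fract (α * a n) ∈ Set.Ico u v)).card : ℝ)
        ≤ (N : ℝ) := by
      have := Finset.card_filter_le (Finset.Icc 1 N) (fun n => Int.fract (α * a n) ∈ Set.Ico u v)
      rw [Nat.card_Icc] at this
      have h2 : N + 1 - 1 = N := by omega
      rw [h2] at this
      exact_mod_cast this
    have hNR : (0:ℝ) ≤ N := by positivity
    nlinarith
  · -- main case
    obtain ⟨lam, hlam⟩ : ∃ l : ℝ, l = v - u := ⟨_, rfl⟩
    have hlam0 : 0 ≤ lam := by rw [hlam]; linarith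
    have hlam1 : lam + ε < 1 := by rw [hlam]; exact hsmall
    obtain ⟨S, hSdef⟩ : ∃ S : ℝ, S = 1 + 48/ε^2 := ⟨_, rfl⟩
    have hS1 : 1 ≤ S := by
      have h32 : 0 < 48/ε^2 := by positivity
      rw [hSdef]; linarith
    have hS0 : 0 < S := lt_of_lt_of_le one_pos hS1
    filter_upwards [offdiag_bound a α h S hS1,
      eventually_ge_atTop (max 5 (⌈max (2*S) (max S (6*S/ε))⌉₊ + 1))] with N hpair hNge
    have hN5 : 5 ≤ N := le_trans (le_max_left _ _) hNge
    have hN0 : 0 < N := by omega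
    have hNR : (0:ℝ) < N := by exact_mod_cast hN0
    have hNbig : max (2*S) (max S (6*S/ε)) ≤ (N:ℝ) := by
      have h1 : (⌈max (2*S) (max S (6*S/ε))⌉₊ + 1 : ℕ) ≤ N := le_trans (le_max_right _ _) hNge
      have h2 := Nat.le_ceil (max (2*S) (max S (6*S/ε)))
      have h3 : ((⌈max (2*S) (max S (6*S/ε))⌉₊ + 1 : ℕ) : ℝ) ≤ (N:ℝ) := by exact_mod_cast h1
      push_cast at h3
      linarith
    have hN2S : 2*S ≤ (N:ℝ) := le_trans (le_max_left _ _) hNbig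
    have hNS : S ≤ (N:ℝ) := le_trans (le_trans (le_max_left _ _) (le_max_right _ _)) hNbig
    have hN6Sε : 6*S/ε ≤ (N:ℝ) := le_trans (le_trans (le_max_right _ _) (le_max_right _ _)) hNbig
    -- setup
    obtain ⟨M, hMdef⟩ : ∃ M : ℕ, M = N^3 := ⟨_, rfl⟩
    have hNR1 : (1:ℝ) ≤ (N:ℝ) := by exact_mod_cast hN0
    have hM0 : 0 < M := by rw [hMdef]; positivity
    have hMR : ((M:ℕ):ℝ) = (N:ℝ)^3 := by rw [hMdef]; push_cast; ring
    have hMR1 : (1:ℝ) ≤ (M:ℝ) := by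
      rw [hMR]
      calc (1:ℝ) = 1^3 := by norm_num
        _ ≤ (N:ℝ)^3 := pow_le_pow_left₀ (by norm_num) hNR1 3
    obtain ⟨δ, hδdef⟩ : ∃ d : ℝ, d = S / N := ⟨_, rfl⟩
    have hδ0 : 0 < δ := by rw [hδdef]; positivity
    have hδhalf : δ ≤ 1/2 := by
      rw [hδdef, div_le_iff₀ hNR]; linarith
    have hδε : δ ≤ ε := by
      rw [hδdef, div_le_iff₀ hNR]
      have : 6*S/ε ≤ N := hN6Sε
      rw [div_le_iff₀ hε] at this
      nlinarith
    have hlamδ : lam + δ ≤ 1 := by linarith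
    -- the count
    obtain ⟨cntF, hcntF⟩ : ∃ F : Finset ℕ, F = (Finset.Icc 1 N).filter (fun n => Int.fract (α * a n) ∈ Set.Ico u v) := ⟨_, rfl⟩
    obtain ⟨cnt, hcnt⟩ : ∃ c : ℝ, c = (cntF.card : ℝ) := ⟨_, rfl⟩
    have hcntN : cnt ≤ (N:ℝ) := by
      rw [hcnt, hcntF]
      have := Finset.card_filter_le (Finset.Icc 1 N) (fun n => Int.fract (α * a n) ∈ Set.Ico u v)
      rw [Nat.card_Icc] at this
      have h2 : N + 1 - 1 = N := by omega
      rw [h2] at this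
      exact_mod_cast this
    by_contra hcon
    push_neg at hcon
    have hcntlow : (lam + ε) * N < cnt := by
      rw [hcnt, hcntF, hlam]; exact hcon
    -- Z function
    obtain ⟨Z, hZ⟩ : ∃ Z : ℕ → ℝ, Z = fun m : ℕ => (((Finset.Icc 1 N).filter
        fun n => Int.fract (α * a n - (m:ℝ)/M) < δ).card : ℝ) := ⟨_, rfl⟩
    obtain ⟨R, hR⟩ : ∃ R : Finset ℕ, R = (range M).filter (fun m : ℕ => Int.fract (v - (m:ℝ)/M) < lam + δ) := ⟨_, rfl⟩
    -- row counts
    have hrow : ∀ n : ℕ, δ * M - 1 ≤ (((range M).filter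
        fun m : ℕ => Int.fract (α * a n - (m:ℝ)/M) < δ).card : ℝ) ∧
        (((range M).filter fun m : ℕ => Int.fract (α * a n - (m:ℝ)/M) < δ).card : ℝ) ≤ δ * M + 1 :=
      fun n => rowCount_bounds M hM0 (α * a n) δ hδ0.le (by linarith)
    -- (2) R card
    have hRcard : (R.card : ℝ) ≤ (lam + δ) * M + 1 := by
      rw [hR]
      exact (rowCount_bounds M hM0 v (lam + δ) (by linarith) hlamδ).2
    have hRcard0 : (0:ℝ) ≤ (R.card : ℝ) := by positivity
    -- swap: sum over range M of Z = sum over n of rowcount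
    have hswap : ∀ T : Finset ℕ, ∑ m ∈ T, Z m
        = ∑ n ∈ Finset.Icc 1 N, ((T.filter fun m : ℕ => Int.fract (α * a n - (m:ℝ)/M) < δ).card : ℝ) := by
      intro T
      rw [hZ]
      simp only [Finset.card_filter]
      push_cast
      rw [Finset.sum_comm]
    -- (3)
    have hZrow : ∀ n ∈ Finset.Icc 1 N, δ * M - 1 ≤ (((range M).filter
        fun m : ℕ => Int.fract (α * a n - (m:ℝ)/M) < δ).card : ℝ) := fun n _ => (hrow n).1
    have hZrow' : ∀ n ∈ Finset.Icc 1 N, (((range M).filter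
        fun m : ℕ => Int.fract (α * a n - (m:ℝ)/M) < δ).card : ℝ) ≤ δ * M + 1 := fun n _ => (hrow n).2
    have hIccN : ((Finset.Icc 1 N).card : ℝ) = (N : ℝ) := by
      rw [Nat.card_Icc]; push_cast; ring
    have hZsum1 : (δ * M - 1) * N ≤ ∑ m ∈ range M, Z m := by
      rw [hswap (range M)]
      calc (δ * M - 1) * N = ∑ _n ∈ Finset.Icc 1 N, (δ * M - 1) := by
            rw [Finset.sum_const, nsmul_eq_mul]
            rw [show ((Finset.Icc 1 N).card : ℝ) = (N:ℝ) from hIccN]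
            ring
        _ ≤ _ := Finset.sum_le_sum hZrow
    have hZsum2 : ∑ m ∈ range M, Z m ≤ (δ * M + 1) * N := by
      rw [hswap (range M)]
      calc ∑ n ∈ Finset.Icc 1 N, (((range M).filter
            fun m : ℕ => Int.fract (α * a n - (m:ℝ)/M) < δ).card : ℝ)
          ≤ ∑ _n ∈ Finset.Icc 1 N, (δ * M + 1) := Finset.sum_le_sum hZrow'
        _ = (δ * M + 1) * N := by
            rw [Finset.sum_const, nsmul_eq_mul, hIccN]; ring
    -- (1) sum over R
    have hZR : cnt * (δ * M - 1) ≤ ∑ m ∈ R, Z m := by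
      rw [hswap R]
      have hsub : ∀ n ∈ cntF, (R.filter fun m : ℕ => Int.fract (α * a n - (m:ℝ)/M) < δ)
          = ((range M).filter fun m : ℕ => Int.fract (α * a n - (m:ℝ)/M) < δ) := by
        intro n hn
        rw [hcntF, Finset.mem_filter] at hn
        obtain ⟨hn1, hn2⟩ := hn
        rw [hR, Finset.filter_filter]
        apply Finset.filter_congr
        intro m _
        simp only [and_iff_right_iff_imp]
        intro hcond
        -- show membership in R condition
        set x := Int.fract (α * a n) with hx
        set t := Int.fract (α * a n - (m:ℝ)/M) with ht
        have hx1 : u ≤ x := hn2.1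
        have hx2 : x < v := hn2.2
        have ht0 : 0 ≤ t := Int.fract_nonneg _
        have hfr : Int.fract (v - (m:ℝ)/M) = (v - x) + t := by
          rw [Int.fract_eq_iff]
          refine ⟨by linarith, by linarith [hcond], ?_⟩
          refine ⟨⌊α * a n - (m:ℝ)/M⌋ - ⌊α * a n⌋, ?_⟩
          rw [ht, hx, Int.fract, Int.fract]
          push_cast
          ring
        rw [hfr]
        linarith [hcond]
      calc cnt * (δ * M - 1) = ∑ _n ∈ cntF, (δ * M - 1) := by
            rw [Finset.sum_const, nsmul_eq_mul, hcnt]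
            try ring
        _ ≤ ∑ n ∈ cntF, ((R.filter fun m : ℕ => Int.fract (α * a n - (m:ℝ)/M) < δ).card : ℝ) := by
            apply Finset.sum_le_sum
            intro n hn
            rw [hsub n hn]
            exact (hrow n).1
        _ ≤ ∑ n ∈ Finset.Icc 1 N, ((R.filter fun m : ℕ => Int.fract (α * a n - (m:ℝ)/M) < δ).card : ℝ) := by
            apply Finset.sum_le_sum_of_subset_of_nonneg
              (by rw [hcntF]; exact Finset.filter_subset _ _)
            intro n _ _
            positivity
    -- (4) second moment
    have hZ2 : ∑ m ∈ range M, (Z m)^2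
        ≤ (δ * M + 1) * N + ((S^2 + 2*S) * M + 2 * (N:ℝ)^2) := by
      have hZsq : ∀ m : ℕ, (Z m)^2 = ∑ p ∈ Finset.Icc 1 N ×ˢ Finset.Icc 1 N,
          (if Int.fract (α * a p.1 - (m:ℝ)/M) < δ then (1:ℝ) else 0)
          * (if Int.fract (α * a p.2 - (m:ℝ)/M) < δ then (1:ℝ) else 0) := by
        intro m
        rw [hZ]
        simp only [Finset.card_filter]
        push_cast
        rw [sq, Finset.sum_mul_sum, ← Finset.sum_product']
      have hswap2 : ∑ m ∈ range M, (Z m)^2 = ∑ p ∈ Finset.Icc 1 N ×ˢ Finset.Icc 1 N,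
          (((range M).filter fun m : ℕ => Int.fract (α * a p.1 - (m:ℝ)/M) < δ
              ∧ Int.fract (α * a p.2 - (m:ℝ)/M) < δ).card : ℝ) := by
        rw [Finset.sum_congr rfl (fun m _ => hZsq m), Finset.sum_comm]
        apply Finset.sum_congr rfl
        intro p _
        rw [Finset.card_filter]
        push_cast
        apply Finset.sum_congr rfl
        intro m _
        by_cases h1 : Int.fract (α * a p.1 - (m:ℝ)/M) < δ <;>
          by_cases h2 : Int.fract (α * a p.2 - (m:ℝ)/M) < δ <;>
          simp [h1, h2]
      rw [hswap2]
      rw [← Finset.sum_filter_add_sum_filter_not (Finset.Icc 1 N ×ˢ Finset.Icc 1 N)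
        (fun p : ℕ × ℕ => p.1 ≠ p.2)]
      have hdiag : ∑ p ∈ (Finset.Icc 1 N ×ˢ Finset.Icc 1 N).filter (fun p : ℕ × ℕ => ¬ p.1 ≠ p.2),
          (((range M).filter fun m : ℕ => Int.fract (α * a p.1 - (m:ℝ)/M) < δ
              ∧ Int.fract (α * a p.2 - (m:ℝ)/M) < δ).card : ℝ) ≤ (δ * M + 1) * N := by
        have hdcard : ((Finset.Icc 1 N ×ˢ Finset.Icc 1 N).filter (fun p : ℕ × ℕ => ¬ p.1 ≠ p.2)).card ≤ N := by
          have hinj : ∀ p ∈ (Finset.Icc 1 N ×ˢ Finset.Icc 1 N).filter (fun p : ℕ × ℕ => ¬ p.1 ≠ p.2),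
              p.1 ∈ Finset.Icc 1 N := by
            intro p hp
            rw [Finset.mem_filter, Finset.mem_product] at hp
            exact hp.1.1
          have := Finset.card_le_card_of_injOn (fun p : ℕ × ℕ => p.1) hinj (by
            intro p hp q hq hpq
            rw [Finset.mem_coe, Finset.mem_filter] at hp hq
            have hp2 : p.1 = p.2 := by tauto
            have hq2 : q.1 = q.2 := by tauto
            exact Prod.ext hpq (by rw [← hp2, ← hq2]; exact hpq))
          rw [Nat.card_Icc] at this
          omega
        calc ∑ p ∈ (Finset.Icc 1 N ×ˢ Finset.Icc 1 N).filter (fun p : ℕ × ℕ => ¬ p.1 ≠ p.2),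
            (((range M).filter fun m : ℕ => Int.fract (α * a p.1 - (m:ℝ)/M) < δ
              ∧ Int.fract (α * a p.2 - (m:ℝ)/M) < δ).card : ℝ)
            ≤ ∑ p ∈ (Finset.Icc 1 N ×ˢ Finset.Icc 1 N).filter (fun p : ℕ × ℕ => ¬ p.1 ≠ p.2),
              (δ * M + 1) := by
              apply Finset.sum_le_sum
              intro p _
              have hsub2 : ((range M).filter fun m : ℕ => Int.fract (α * a p.1 - (m:ℝ)/M) < δ
                  ∧ Int.fract (α * a p.2 - (m:ℝ)/M) < δ)
                  ⊆ ((range M).filter fun m : ℕ => Int.fract (α * a p.1 - (m:ℝ)/M) < δ) := by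
                intro m hm
                rw [Finset.mem_filter] at hm ⊢
                exact ⟨hm.1, hm.2.1⟩
              calc (((range M).filter fun m : ℕ => Int.fract (α * a p.1 - (m:ℝ)/M) < δ
                  ∧ Int.fract (α * a p.2 - (m:ℝ)/M) < δ).card : ℝ)
                  ≤ (((range M).filter fun m : ℕ => Int.fract (α * a p.1 - (m:ℝ)/M) < δ).card : ℝ) := by
                    exact_mod_cast Finset.card_le_card hsub2
                _ ≤ δ * M + 1 := (hrow p.1).2
          _ ≤ (δ * M + 1) * N := by
              rw [Finset.sum_const, nsmul_eq_mul]
              have hc : (((Finset.Icc 1 N ×ˢ Finset.Icc 1 N).filter (fun p : ℕ × ℕ => ¬ p.1 ≠ p.2)).card : ℝ) ≤ (N:ℝ) := by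
                exact_mod_cast hdcard
              have hδM1 : (0:ℝ) ≤ δ * M + 1 := by
                have := mul_nonneg hδ0.le (le_trans zero_le_one hMR1)
                linarith
              nlinarith [mul_le_mul_of_nonneg_right hc hδM1]
      have hoff : ∑ p ∈ (Finset.Icc 1 N ×ˢ Finset.Icc 1 N).filter (fun p : ℕ × ℕ => p.1 ≠ p.2),
          (((range M).filter fun m : ℕ => Int.fract (α * a p.1 - (m:ℝ)/M) < δ
              ∧ Int.fract (α * a p.2 - (m:ℝ)/M) < δ).card : ℝ)
          ≤ (S^2 + 2*S) * M + 2 * (N:ℝ)^2 := by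
        have hP2 : (((Finset.Icc 1 N ×ˢ Finset.Icc 1 N).filter (fun p : ℕ × ℕ => p.1 ≠ p.2)).card : ℝ)
            ≤ (N:ℝ)^2 := by
          have h1 := Finset.card_filter_le (Finset.Icc 1 N ×ˢ Finset.Icc 1 N) (fun p : ℕ × ℕ => p.1 ≠ p.2)
          rw [Finset.card_product, Nat.card_Icc] at h1
          have : N + 1 - 1 = N := by omega
          rw [this] at h1
          have h2 : (((Finset.Icc 1 N ×ˢ Finset.Icc 1 N).filter (fun p : ℕ × ℕ => p.1 ≠ p.2)).card : ℝ) ≤ ((N * N : ℕ) : ℝ) := by exact_mod_cast h1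
          push_cast at h2
          nlinarith
        calc ∑ p ∈ (Finset.Icc 1 N ×ˢ Finset.Icc 1 N).filter (fun p : ℕ × ℕ => p.1 ≠ p.2),
            (((range M).filter fun m : ℕ => Int.fract (α * a p.1 - (m:ℝ)/M) < δ
              ∧ Int.fract (α * a p.2 - (m:ℝ)/M) < δ).card : ℝ)
            ≤ ∑ p ∈ (Finset.Icc 1 N ×ˢ Finset.Icc 1 N).filter (fun p : ℕ × ℕ => p.1 ≠ p.2),
              (max 0 (δ - intDist (α * ((a p.1 : ℝ) - (a p.2 : ℝ)))) * M + 2) := by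
              apply Finset.sum_le_sum
              intro p _
              have := pairOverlap M hM0 (α * a p.1) (α * a p.2) δ hδ0 hδhalf
              rw [show α * (a p.1 : ℝ) - α * (a p.2 : ℝ) = α * ((a p.1 : ℝ) - (a p.2 : ℝ)) from by ring] at this
              exact this
          _ = (∑ p ∈ (Finset.Icc 1 N ×ˢ Finset.Icc 1 N).filter (fun p : ℕ × ℕ => p.1 ≠ p.2),
              max 0 (δ - intDist (α * ((a p.1 : ℝ) - (a p.2 : ℝ))))) * M
              + 2 * (((Finset.Icc 1 N ×ˢ Finset.Icc 1 N).filter (fun p : ℕ × ℕ => p.1 ≠ p.2)).card : ℝ) := by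
              rw [Finset.sum_add_distrib, Finset.sum_const, Finset.sum_mul, nsmul_eq_mul]
              ring
          _ ≤ (S^2 + 2*S) * M + 2 * (N:ℝ)^2 := by
              have hps : ∑ p ∈ (Finset.Icc 1 N ×ˢ Finset.Icc 1 N).filter (fun p : ℕ × ℕ => p.1 ≠ p.2),
                  max 0 (δ - intDist (α * ((a p.1 : ℝ) - (a p.2 : ℝ)))) ≤ S^2 + 2*S := by
                rw [hδdef]
                exact hpair
              nlinarith [hMR1]
      linarith
    -- (5) variance
    have hV2 : ∑ m ∈ range M, (Z m - S)^2 ≤ 3*S*M + ((N:ℝ) + 2*(N:ℝ)^2 + 2*S*N) := by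
      have hexp : ∑ m ∈ range M, (Z m - S)^2
          = ∑ m ∈ range M, (Z m)^2 - 2*S*(∑ m ∈ range M, Z m) + S^2*M := by
        rw [Finset.mul_sum, ← Finset.sum_sub_distrib]
        rw [show S^2*(M:ℝ) = ∑ _m ∈ range M, S^2 from by
          rw [Finset.sum_const, Finset.card_range, nsmul_eq_mul]; ring]
        rw [← Finset.sum_add_distrib]
        apply Finset.sum_congr rfl
        intro m _
        ring
      rw [hexp]
      have hδM : δ * (M:ℝ) * N = S * M := by
        rw [hδdef]; field_simp
      have h2S : 2*S*((δ * M - 1) * N) ≤ 2*S*(∑ m ∈ range M, Z m) :=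
        mul_le_mul_of_nonneg_left hZsum1 (by positivity)
      have e1 : (δ * M + 1) * N = S*M + N := by
        rw [← hδM]; ring
      have e2 : (δ * M - 1) * N = S*M - N := by
        rw [← hδM]; ring
      rw [e1] at hZ2
      rw [e2] at h2S
      nlinarith [hZ2, h2S]
    -- Cauchy-Schwarz
    have hCS : (∑ m ∈ R, (Z m - S))^2 ≤ (R.card : ℝ) * ∑ m ∈ range M, (Z m - S)^2 := by
      have h1 := Finset.sum_mul_sq_le_sq_mul_sq R (fun _ => (1:ℝ)) (fun m => Z m - S)
      simp only [one_mul, one_pow] at h1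
      have h2 : ∑ m ∈ R, ((1:ℝ)) = (R.card : ℝ) := by
        rw [Finset.sum_const, nsmul_eq_mul]; ring
      rw [h2] at h1
      calc (∑ m ∈ R, (Z m - S))^2 ≤ (R.card : ℝ) * ∑ m ∈ R, (Z m - S)^2 := h1
        _ ≤ (R.card : ℝ) * ∑ m ∈ range M, (Z m - S)^2 := by
            apply mul_le_mul_of_nonneg_left _ hRcard0
            apply Finset.sum_le_sum_of_subset_of_nonneg
            · rw [hR]; exact Finset.filter_subset _ _
            · intro m _ _; positivity
    -- lower bound on sum over R of V
    have hVRsum : ∑ m ∈ R, (Z m - S) = (∑ m ∈ R, Z m) - S * (R.card : ℝ) := by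
      rw [Finset.sum_sub_distrib, Finset.sum_const, nsmul_eq_mul]
      ring
    -- final contradiction
    clear hpair hcon hrow hswap hZrow hZrow' hIccN hZsum1 hZsum2 hZ2 hZ hR hcntF
    have h5n : (5:ℝ) ≤ (N:ℝ) := by exact_mod_cast hN5
    have hδMe : δ * (M:ℝ) = S * (N:ℝ)^2 := by
      rw [hδdef, hMR]; field_simp
    have hRcard' : (R.card : ℝ) ≤ lam * (N:ℝ)^3 + S * (N:ℝ)^2 + 1 := by
      have h1 : (lam + δ) * (M:ℝ) + 1 = lam * (M:ℝ) + δ * (M:ℝ) + 1 := by ring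
      rw [h1, hδMe, hMR] at hRcard
      linarith
    have hA1 : cnt * (S * (N:ℝ)^2 - 1) ≤ ∑ m ∈ R, Z m := by
      rw [← hδMe]; exact hZR
    have hA4 : ∑ m ∈ range M, (Z m - S)^2
        ≤ 3*S*(N:ℝ)^3 + ((N:ℝ) + 2*(N:ℝ)^2 + 2*S*(N:ℝ)) := by
      rw [hMR] at hV2
      exact hV2
    have hA6 : (0:ℝ) ≤ ∑ m ∈ range M, (Z m - S)^2 := by
      apply Finset.sum_nonneg; intro m _; positivity
    have hCS' : (∑ m ∈ R, (Z m - S))^2 ≤ (R.card : ℝ) * ∑ m ∈ range M, (Z m - S)^2 := hCS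
    have hVR' : ∑ m ∈ R, (Z m - S) = (∑ m ∈ R, Z m) - S * (R.card : ℝ) := hVRsum
    have hNn : 6*S ≤ ε * N := by
      rw [div_le_iff₀ hε] at hN6Sε
      linarith
    have hScontra : 48 < ε^2 * S := by
      rw [hSdef]
      have hε2 : (0:ℝ) < ε^2 := by positivity
      have : ε^2 * (1 + 48/ε^2) = ε^2 + 48 := by field_simp
      rw [this]
      linarith
    exact final_numeric ε S (N:ℝ) lam cnt (R.card : ℝ) (∑ m ∈ R, Z m)
      (∑ m ∈ range M, (Z m - S)^2) (∑ m ∈ R, (Z m - S))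
      hε hS1 hScontra hNR1 h5n hNn hNS hlam0 hlam1 hcntN hcntlow
      hRcard' hRcard0 hA1 hA4 hA6 hVR' hCS'

/-- If the pair correlations of `(α a_n)` are Poissonian (for every `s > 0`), then the
sequence `(α·a_n mod 1)` is equidistributed in `ℝ/ℤ`. -/
theorem equidistributed_of_poissonian_pairCorr (a : ℕ → ℕ) (ha : StrictMono a) (α : ℝ)
    (h : ∀ s : ℝ, 0 < s → Tendsto (fun N => pairCorr a α s N) atTop (nhds (2 * s))) :
    ∀ u v : ℝ, 0 ≤ u → u ≤ v → v ≤ 1 →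
      Tendsto (fun N : ℕ =>
          (((Finset.Icc 1 N).filter (fun n => Int.fract (α * a n) ∈ Set.Ico u v)).card : ℝ) / N)
        atTop (nhds (v - u)) := by
  intro u v hu huv hv
  have h' : ∀ s : ℝ, 0 < s → Tendsto (fun N => pairCorr a α s N) atTop (nhds (2*s)) := h
  rw [Metric.tendsto_atTop]
  intro ε hε
  have hub := upper_bound a α h' u v hu huv hv (ε/2) (by linarith)
  have hubB := upper_bound a α h' 0 u le_rfl hu (le_trans huv hv) (ε/4) (by linarith)
  have hubC := upper_bound a α h' v 1 (le_trans hu huv) hv le_rfl (ε/4) (by linarith)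
  have hcomb := (hub.and (hubB.and hubC)).and (eventually_ge_atTop 1)
  rw [eventually_atTop] at hcomb
  obtain ⟨N₀, hN₀⟩ := hcomb
  refine ⟨N₀, fun N hN => ?_⟩
  obtain ⟨⟨h1, h2, h3⟩, hN1⟩ := hN₀ N hN
  -- splitting identity
  have hsplit : ((Finset.Icc 1 N).filter (fun n => Int.fract (α * a n) ∈ Set.Ico u v)).card
      + (((Finset.Icc 1 N).filter (fun n => Int.fract (α * a n) ∈ Set.Ico 0 u)).card
      + ((Finset.Icc 1 N).filter (fun n => Int.fract (α * a n) ∈ Set.Ico v 1)).card) = N := by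
    have e1 := Finset.card_filter_add_card_filter_not (s := Finset.Icc 1 N)
      (p := fun n => Int.fract (α * a n) ∈ Set.Ico u v)
    have e2 := Finset.card_filter_add_card_filter_not
      (s := (Finset.Icc 1 N).filter (fun n => ¬ (Int.fract (α * a n) ∈ Set.Ico u v)))
      (p := fun n => Int.fract (α * a n) < u)
    have sB : ((Finset.Icc 1 N).filter (fun n => ¬ (Int.fract (α * a n) ∈ Set.Ico u v))).filter
        (fun n => Int.fract (α * a n) < u)
        = (Finset.Icc 1 N).filter (fun n => Int.fract (α * a n) ∈ Set.Ico 0 u) := by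
      rw [Finset.filter_filter]
      apply Finset.filter_congr
      intro n _
      simp only [Set.mem_Ico]
      constructor
      · rintro ⟨_, hlt⟩
        exact ⟨Int.fract_nonneg _, hlt⟩
      · rintro ⟨_, hlt⟩
        exact ⟨fun hc => absurd hc.1 (by linarith), hlt⟩
    have sC : ((Finset.Icc 1 N).filter (fun n => ¬ (Int.fract (α * a n) ∈ Set.Ico u v))).filter
        (fun n => ¬ Int.fract (α * a n) < u)
        = (Finset.Icc 1 N).filter (fun n => Int.fract (α * a n) ∈ Set.Ico v 1) := by
      rw [Finset.filter_filter]
      apply Finset.filter_congr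
      intro n _
      simp only [Set.mem_Ico, not_lt]
      constructor
      · rintro ⟨hnp, hge⟩
        refine ⟨?_, Int.fract_lt_one _⟩
        by_contra hc
        push_neg at hc
        exact hnp ⟨hge, hc⟩
      · rintro ⟨hge, _⟩
        constructor
        · rintro ⟨_, hlt⟩
          linarith
        · linarith
    rw [sB, sC] at e2
    have hIcc : (Finset.Icc 1 N).card = N := by rw [Nat.card_Icc]; omega
    omega
  -- now real arithmetic
  have hNR : (0:ℝ) < N := by exact_mod_cast hN1
  have hsplitR : (((Finset.Icc 1 N).filter (fun n => Int.fract (α * a n) ∈ Set.Ico u v)).card : ℝ)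
      + ((((Finset.Icc 1 N).filter (fun n => Int.fract (α * a n) ∈ Set.Ico 0 u)).card : ℝ)
      + (((Finset.Icc 1 N).filter (fun n => Int.fract (α * a n) ∈ Set.Ico v 1)).card : ℝ)) = (N:ℝ) := by
    exact_mod_cast hsplit
  set cA := (((Finset.Icc 1 N).filter (fun n => Int.fract (α * a n) ∈ Set.Ico u v)).card : ℝ)
  set cB := (((Finset.Icc 1 N).filter (fun n => Int.fract (α * a n) ∈ Set.Ico 0 u)).card : ℝ)
  set cC := (((Finset.Icc 1 N).filter (fun n => Int.fract (α * a n) ∈ Set.Ico v 1)).card : ℝ)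
  rw [Real.dist_eq, abs_lt]
  have hcB : cB ≤ (u - 0 + ε/4) * N := h2
  have hcC : cC ≤ (1 - v + ε/4) * N := h3
  have hcA : cA ≤ (v - u + ε/2) * N := h1
  have hup : cA / N ≤ (v - u) + ε/2 := by
    rw [div_le_iff₀ hNR]; nlinarith [h1]
  have hlow : (v - u) - ε/2 ≤ cA / N := by
    rw [le_div_iff₀ hNR]; nlinarith [hsplitR, hcB, hcC]
  constructor <;> [linarith; linarith]
end

section
/- The set of all natural numbers (i.e. the sequence a_n = n) is not metric Poissonian. -/
open MeasureTheory Filter Finset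
open scoped Classical

lemma intDist_le (x : ℝ) (m : ℤ) : intDist x ≤ |x - m| := round_le x m

lemma intDist_rat_lower {p : ℤ} {d : ℕ} (hd : 0 < d) (hnd : ¬ ((d:ℤ) ∣ p)) :
    1 / (d:ℝ) ≤ intDist ((p:ℝ)/d) := by
  have hd' : (0:ℝ) < d := by exact_mod_cast hd
  unfold intDist
  set m := round ((p:ℝ)/(d:ℝ)) with hm
  have h1 : ((p:ℝ)/d - m) = ((p - m*d : ℤ) : ℝ)/d := by push_cast; field_simp
  have hne : p - m*d ≠ 0 := by
    intro h
    exact hnd ⟨m, by linarith [sub_eq_zero.mp h]⟩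
  have h2 : (1:ℝ) ≤ |((p - m*d : ℤ) : ℝ)| := by
    rw [← Int.cast_abs]
    exact_mod_cast Int.one_le_abs hne
  rw [h1, abs_div, abs_of_pos hd']
  exact div_le_div_of_nonneg_right h2 hd'.le |>.trans_eq rfl

lemma intDist_triangle (x y : ℝ) : intDist y - |x - y| ≤ intDist x := by
  have h1 : intDist y ≤ |y - round x| := intDist_le y (round x)
  have h2 : |y - round x| ≤ |y - x| + |x - round x| := abs_sub_le _ _ _
  have h3 : |y - x| = |x - y| := abs_sub_comm _ _
  unfold intDist at *
  linarith

lemma exists_good_den {α : ℝ} (hα : Irrational α) (D : ℕ) :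
    ∃ q : ℚ, |α - q| < 1/(q.den:ℝ)^2 ∧ D ≤ q.den := by
  by_contra hc
  push_neg at hc
  apply Real.infinite_rat_abs_sub_lt_one_div_den_sq_of_irrational hα
  set S := {q : ℚ | |α - (q:ℝ)| < 1 / (q.den : ℝ) ^ 2} with hS
  set M : ℤ := ⌈(|α|+1) * D⌉ with hM
  have hinj : Function.Injective (fun q : ℚ => ((q.num, q.den) : ℤ × ℕ)) := by
    intro a b hab
    simp only [Prod.mk.injEq] at hab
    rw [← Rat.num_div_den a, ← Rat.num_div_den b, hab.1, hab.2]
  have himg : ((fun q : ℚ => ((q.num, q.den) : ℤ × ℕ)) '' S) ⊆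
      Set.Icc (-M) M ×ˢ Set.Icc 0 D := by
    rintro ⟨n, d⟩ ⟨q, hq, hqe⟩
    obtain ⟨h1, h2⟩ := Prod.mk.injEq .. ▸ hqe
    have hden : q.den < D := hc q hq
    have hd0 : (0:ℝ) < (q.den : ℝ) := by exact_mod_cast q.pos
    have hq1 : |α - (q:ℝ)| < 1 := by
      refine hq.trans_le ?_
      rw [div_le_one (by positivity)]
      have : (1:ℝ) ≤ (q.den:ℝ) := by exact_mod_cast q.pos
      nlinarith
    have hqabs : |(q:ℝ)| ≤ |α| + 1 := by
      have h := abs_sub_abs_le_abs_sub (q:ℝ) α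
      rw [abs_sub_comm] at hq1
      linarith
    have hnum : |(q.num:ℝ)| ≤ (|α|+1) * D := by
      have : (q.num:ℝ) = (q:ℝ) * q.den := by
        rw [Rat.cast_def]; field_simp
      rw [this, abs_mul, abs_of_pos hd0]
      have hdD : (q.den:ℝ) ≤ (D:ℝ) := by exact_mod_cast hden.le
      have h0q : (0:ℝ) ≤ |(q:ℝ)| := abs_nonneg _
      nlinarith
    have hnum' : |q.num| ≤ M := by
      have : ((|q.num|:ℤ):ℝ) ≤ (M:ℝ) := by
        rw [Int.cast_abs]
        exact hnum.trans (Int.le_ceil _)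
      exact_mod_cast this
    constructor
    · simp only [← h1, Set.mem_Icc]
      exact abs_le.mp hnum'
    · simp only [← h2, Set.mem_Icc]
      exact ⟨Nat.zero_le _, hden.le⟩
  exact Set.Finite.of_finite_image
    (Set.Finite.subset ((Set.finite_Icc _ _).prod (Set.finite_Icc _ _)) himg) hinj.injOn

lemma key_est {α : ℝ} {q : ℚ} (hq : |α - (q:ℝ)| < 1/(q.den:ℝ)^2) (hd : 3 ≤ q.den)
    (k : ℤ) (hk0 : k ≠ 0) (hk : |k| ≤ ((q.den / 2 : ℕ) : ℤ)) :
    1 / (2 * (q.den:ℝ)) < intDist (α * k) := by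
  set d := q.den with hdd
  have hd0 : 0 < d := by omega
  have hd0' : (0:ℝ) < (d:ℝ) := by exact_mod_cast hd0
  -- |k| < d
  have hkd : |k| < (d:ℤ) := by
    have : (d/2 : ℕ) < d := by omega
    omega
  -- non-divisibility
  have hnd : ¬ ((d:ℤ) ∣ q.num * k) := by
    intro hdiv
    have hcop : Int.gcd (d:ℤ) q.num = 1 := by
      have := q.reduced
      simpa [Int.gcd, Nat.coprime_comm] using Nat.Coprime.symm this
    have hdk : (d:ℤ) ∣ k := by
      exact Int.dvd_of_dvd_mul_right_of_gcd_one hdiv hcop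
    have := Int.le_of_dvd (abs_pos.mpr hk0) (dvd_abs .. |>.mpr hdk)
    omega
  have h1 : 1 / (d:ℝ) ≤ intDist ((q:ℝ) * k) := by
    have : ((q:ℝ)) * k = ((q.num * k : ℤ) : ℝ) / (d:ℝ) := by
      rw [Rat.cast_def]; push_cast; ring
    rw [this]
    exact intDist_rat_lower hd0 hnd
  -- |αk - qk| < 1/(2d)
  have hkreal : |(k:ℝ)| ≤ (d:ℝ)/2 := by
    have h2 : ((d/2 : ℕ):ℝ) ≤ (d:ℝ)/2 := by
      rw [le_div_iff₀ (by norm_num : (0:ℝ) < 2)]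
      exact_mod_cast Nat.div_mul_le_self d 2
    have h3 : ((|k|:ℤ):ℝ) ≤ (((d/2 : ℕ):ℤ):ℝ) := by exact_mod_cast hk
    rw [← Int.cast_abs]
    refine h3.trans ?_
    exact le_trans (by push_cast; exact le_refl _) h2
  have hkpos : (1:ℝ) ≤ |(k:ℝ)| := by
    rw [← Int.cast_abs]
    exact_mod_cast Int.one_le_abs hk0
  have h2 : |α * k - (q:ℝ) * k| < 1 / (2 * (d:ℝ)) := by
    have : |α * k - (q:ℝ) * k| = |α - (q:ℝ)| * |(k:ℝ)| := by
      rw [← abs_mul]; ring_nf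
    rw [this]
    have hb : |α - (q:ℝ)| * |(k:ℝ)| < (1/(d:ℝ)^2) * ((d:ℝ)/2) := by
      have h0 : (0:ℝ) < |(k:ℝ)| := by linarith
      calc |α - (q:ℝ)| * |(k:ℝ)| < (1/(d:ℝ)^2) * |(k:ℝ)| := by
            exact mul_lt_mul_of_pos_right hq h0
        _ ≤ (1/(d:ℝ)^2) * ((d:ℝ)/2) := by
            exact mul_le_mul_of_nonneg_left hkreal (by positivity)
    have he : (1/(d:ℝ)^2) * ((d:ℝ)/2) = 1/(2*(d:ℝ)) := by field_simp
    linarith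
  have h3 := intDist_triangle (α * k) ((q:ℝ) * k)
  have : 1/(d:ℝ) - 1/(2*(d:ℝ)) = 1/(2*(d:ℝ)) := by field_simp; ring
  linarith

lemma frequently_zero {α : ℝ} (hα : Irrational α) (N₀ : ℕ) :
    ∃ N, N₀ ≤ N ∧ pairCorr (fun n => n) α (1/8) N = 0 := by
  obtain ⟨q, hq, hden⟩ := exists_good_den hα (2*N₀ + 3)
  set d := q.den with hdd
  have hd3 : 3 ≤ d := by omega
  refine ⟨d/2, by omega, ?_⟩
  have hN1 : 1 ≤ d/2 := by omega
  have hNd : d ≤ 4 * (d/2) := by omega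
  have hN0 : (0:ℝ) < ((d/2 : ℕ):ℝ) := by exact_mod_cast hN1
  have hd0 : (0:ℝ) < (d:ℝ) := by positivity
  unfold pairCorr
  rw [Finset.filter_false_of_mem, Finset.card_empty]
  · simp
  · rintro ⟨i, j⟩ hp
    rw [Finset.mem_product, Finset.mem_Icc, Finset.mem_Icc] at hp
    rintro ⟨hne, hle⟩
    have hk0 : ((i:ℤ) - j) ≠ 0 := by
      intro h; apply hne; simpa using (by omega : i = j)
    have hk : |(i:ℤ) - j| ≤ ((d/2 : ℕ):ℤ) := by rw [abs_le]; omega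
    have hest := key_est hq hd3 ((i:ℤ) - j) hk0 hk
    have hcast : α * ((i:ℝ) - (j:ℝ)) = α * (((i:ℤ) - j : ℤ) : ℝ) := by push_cast; ring
    rw [hcast] at hle
    have harith : (1/8:ℝ) / ((d/2 : ℕ):ℝ) ≤ 1 / (2 * (d:ℝ)) := by
      rw [div_le_div_iff₀ (by positivity) (by positivity)]
      have : (d:ℝ) ≤ 4 * ((d/2:ℕ):ℝ) := by exact_mod_cast hNd
      linarith
    linarith


/-- The set of all natural numbers (the sequence `a_n = n`) is not metric Poissonian. -/
theorem naturals_not_metricPoissonian : ¬ MetricPoissonian (fun n => n) := by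
  intro h
  have hrat : ∀ᵐ α ∂(volume.restrict (Set.Icc (0:ℝ) 1)), Irrational α := by
    apply ae_restrict_of_ae
    have h0 : volume (Set.range ((↑) : ℚ → ℝ)) = 0 :=
      (Set.countable_range _).measure_zero _
    have := (MeasureTheory.measure_eq_zero_iff_ae_notMem (μ := volume)).mp h0
    filter_upwards [this] with α hα
    exact hα
  have hne : (volume.restrict (Set.Icc (0:ℝ) 1)) ≠ 0 := by
    intro h0
    have h1 : (volume.restrict (Set.Icc (0:ℝ) 1)) Set.univ = 1 := by
      rw [Measure.restrict_apply_univ, Real.volume_Icc]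
      norm_num
    rw [h0] at h1
    simp at h1
  haveI : (ae (volume.restrict (Set.Icc (0:ℝ) 1))).NeBot := ae_neBot.mpr hne
  obtain ⟨α, hP, hirr⟩ := (h.and hrat).exists
  have ht := hP (1/8) (by norm_num)
  have hev : ∀ᶠ N in atTop, (1/8:ℝ) < pairCorr (fun n => n) α (1/8) N :=
    ht.eventually (eventually_gt_nhds (by norm_num))
  obtain ⟨N₀, hN₀⟩ := eventually_atTop.mp hev
  obtain ⟨N, hN, hz⟩ := frequently_zero hirr N₀
  have := hN₀ N hN
  rw [hz] at this
  norm_num at this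
end
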